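/- arXiv:1603.09113 — 5 statements merged into one kernel-verified Lean document; each statement's English description precedes it below -/
import Mathlib

section
/- Let (X, d) be a metric space. Suppose that for every upper semicontinuous function u : X → ℝ that is bounded above, and every ε > 0, there exists x_ε ∈ X with u(x_ε) > sup u − ε and u(y) ≤ u(x_ε) + ε·d(x_ε, y) for all y ∈ X. Then X is a complete metric space. (Converse of Ekeland's variational principle, due to Weston and Sullivan.) -/
/-- Converse of Ekeland's variational principle (Weston, Sullivan): if a metric
space satisfies the Ekeland maximum principle for all upper semicontinuous functions
bounded above, then it is complete. -/
theorem completeSpace_of_ekeland {X : Type*} [MetricSpace X]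
    (h : ∀ u : X → ℝ, UpperSemicontinuous u → BddAbove (Set.range u) →
      ∀ ε : ℝ, 0 < ε → ∃ x : X, (⨆ y, u y) - ε < u x ∧
        ∀ y : X, u y ≤ u x + ε * dist x y) :
    CompleteSpace X := by
  refine Metric.complete_of_cauchySeq_tendsto fun s hs => ?_
  -- the auxiliary limit function
  have hconv : ∀ x : X, ∃ L : ℝ, Filter.Tendsto (fun n => dist x (s n)) Filter.atTop (nhds L) := by
    intro x
    have hc : CauchySeq (fun n => dist x (s n)) :=
      ((LipschitzWith.dist_right x).uniformContinuous.comp_cauchySeq hs)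
    exact cauchySeq_tendsto_of_complete hc
  set F : X → ℝ := fun x => Classical.choose (hconv x) with hF
  have hFt : ∀ x : X, Filter.Tendsto (fun n => dist x (s n)) Filter.atTop (nhds (F x)) :=
    fun x => Classical.choose_spec (hconv x)
  have hF0 : ∀ x, 0 ≤ F x := fun x =>
    ge_of_tendsto (hFt x) (Filter.Eventually.of_forall fun n => dist_nonneg)
  have hLip : LipschitzWith 1 F := by
    refine LipschitzWith.of_dist_le_mul fun x y => ?_
    rw [Real.dist_eq]
    have : Filter.Tendsto (fun n => |dist x (s n) - dist y (s n)|) Filter.atTop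
        (nhds |F x - F y|) := ((hFt x).sub (hFt y)).abs
    refine le_of_tendsto this (Filter.Eventually.of_forall fun n => ?_)
    simpa [NNReal.coe_one, one_mul] using abs_dist_sub_le x y (s n)
  -- F (s n) → 0
  have hFs : Filter.Tendsto (fun n => F (s n)) Filter.atTop (nhds 0) := by
    rw [Metric.tendsto_atTop]
    intro η hη
    obtain ⟨N, hN⟩ := Metric.cauchySeq_iff.mp hs (η / 2) (by linarith)
    refine ⟨N, fun n hn => ?_⟩
    have hle : F (s n) ≤ η / 2 := by
      refine le_of_tendsto (hFt (s n)) ?_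
      filter_upwards [Filter.eventually_ge_atTop N] with m hm
      exact le_of_lt (hN n hn m hm)
    rw [Real.dist_eq, sub_zero, abs_of_nonneg (hF0 _)]
    linarith
  -- apply the hypothesis to u = -F with ε = 1/2
  obtain ⟨x, -, hx2⟩ := h (fun x => -F x) ((hLip.continuous.neg).upperSemicontinuous)
    ⟨0, by rintro _ ⟨y, rfl⟩; simpa using hF0 y⟩ (1/2) (by norm_num)
  have key : (0 : ℝ) ≤ -F x + (1/2) * F x := by
    have h1 : Filter.Tendsto (fun n => -F (s n)) Filter.atTop (nhds 0) := by
      simpa using hFs.neg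
    have h2 : Filter.Tendsto (fun n => -F x + (1/2) * dist x (s n)) Filter.atTop
        (nhds (-F x + (1/2) * F x)) :=
      Filter.Tendsto.const_add _ ((hFt x).const_mul _)
    exact le_of_tendsto_of_tendsto' h1 h2 fun n => hx2 (s n)
  have hFx : F x = 0 := le_antisymm (by linarith) (hF0 x)
  refine ⟨x, ?_⟩
  rw [tendsto_iff_dist_tendsto_zero]
  simpa [hFx, dist_comm] using hFt x
end

section
/- Let λ > 0, b ∈ ℝ, and u : (−∞, b) → ℝ a C² function with u ≥ 1, u′ > 0 on (−∞, b), and u″ ≤ λ² u. Suppose moreover 0 ∈ (−∞, b). Then u′(0) ≤ λ u(0). -/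
/-- One-dimensional comparison: if `u : (-∞, b) → ℝ` is `C²` with `u ≥ 1`, `u' > 0`
and `u'' ≤ λ² u` on `(-∞, b)`, and `0 < b`, then `u'(0) ≤ λ u(0)`. -/
theorem deriv_le_of_second_deriv_le {lam b : ℝ} (hlam : 0 < lam) (u : ℝ → ℝ)
    (hu : ContDiffOn ℝ 2 u (Set.Iio b))
    (h1 : ∀ s < b, 1 ≤ u s)
    (h2 : ∀ s < b, 0 < deriv u s)
    (h3 : ∀ s < b, deriv (deriv u) s ≤ lam ^ 2 * u s)
    (hb : (0 : ℝ) < b) :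
    deriv u 0 ≤ lam * u 0 := by
  by_contra hcon
  push_neg at hcon
  have hopen : IsOpen (Set.Iio b) := isOpen_Iio
  have hu1 : ContDiffOn ℝ 1 (deriv u) (Set.Iio b) :=
    hu.deriv_of_isOpen hopen (by norm_num)
  have hdiffu : ∀ x ∈ Set.Iio b, DifferentiableAt ℝ u x := fun x hx =>
    ((hu.differentiableOn (by norm_num)).differentiableAt (hopen.mem_nhds hx))
  have hdiffu' : ∀ x ∈ Set.Iio b, DifferentiableAt ℝ (deriv u) x := fun x hx =>
    ((hu1.differentiableOn (by norm_num)).differentiableAt (hopen.mem_nhds hx))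
  set g : ℝ → ℝ := fun s => Real.exp (lam * s) * (deriv u s - lam * u s) with hg
  have hgderiv : ∀ x ∈ Set.Iio b,
      HasDerivAt g (Real.exp (lam * x) * (deriv (deriv u) x - lam ^ 2 * u x)) x := by
    intro x hx
    have he : HasDerivAt (fun s => Real.exp (lam * s)) (Real.exp (lam * x) * lam) x := by
      simpa using (HasDerivAt.exp ((hasDerivAt_id x).const_mul lam))
    have hw : HasDerivAt (fun s => deriv u s - lam * u s)
        (deriv (deriv u) x - lam * deriv u x) x :=
      ((hdiffu' x hx).hasDerivAt).sub (((hdiffu x hx).hasDerivAt).const_mul lam)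
    have := he.mul hw
    exact this.congr_deriv (by ring)
  have hIic : Set.Iic (0:ℝ) ⊆ Set.Iio b := fun x hx => lt_of_le_of_lt hx hb
  have hgcont : ContinuousOn g (Set.Iic 0) := by
    have : ContinuousOn g (Set.Iio b) :=
      (Real.continuous_exp.comp (continuous_const.mul continuous_id)).continuousOn.mul
        ((hu1.continuousOn).sub ((hu.continuousOn).const_smul lam))
    exact this.mono hIic
  have hganti : AntitoneOn g (Set.Iic 0) := by
    apply antitoneOn_of_deriv_nonpos (convex_Iic 0) hgcont
    · intro x hx
      rw [interior_Iic] at hx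
      exact ((hgderiv x (hIic (Set.mem_Iic.mpr (le_of_lt hx)))).differentiableAt).differentiableWithinAt
    · intro x hx
      rw [interior_Iic] at hx
      have hxb : x ∈ Set.Iio b := hIic (Set.mem_Iic.mpr (le_of_lt hx))
      rw [(hgderiv x hxb).deriv]
      have := h3 x hxb
      nlinarith [Real.exp_pos (lam * x)]
  have hwpos : ∀ t ≤ (0:ℝ), lam * u t < deriv u t := by
    intro t ht
    have := hganti (Set.mem_Iic.2 ht) (Set.mem_Iic.2 le_rfl) ht
    have hg0 : 0 < g 0 := by
      simp only [hg, mul_zero, Real.exp_zero, one_mul]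
      linarith
    have hgt : 0 < g t := lt_of_lt_of_le hg0 this
    simp only [hg] at hgt
    nlinarith [Real.exp_pos (lam * t)]
  -- h s = u s - lam * s is monotone on Iic 0
  set h : ℝ → ℝ := fun s => u s - lam * s with hh
  have hhmono : MonotoneOn h (Set.Iic 0) := by
    apply monotoneOn_of_deriv_nonneg (convex_Iic 0)
    · exact ((hu.continuousOn.mono hIic).sub (continuous_const.mul continuous_id).continuousOn)
    · intro x hx
      rw [interior_Iic] at hx
      have hxb : x ∈ Set.Iio b := hIic (Set.mem_Iic.mpr (le_of_lt hx))
      exact (((hdiffu x hxb).sub ((differentiable_id.const_mul lam) x)).differentiableWithinAt)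
    · intro x hx
      rw [interior_Iic] at hx
      have hxb : x ∈ Set.Iio b := hIic (Set.mem_Iic.mpr (le_of_lt hx))
      have hd : deriv h x = deriv u x - lam := by
        have : HasDerivAt h (deriv u x - lam * 1) x :=
          ((hdiffu x hxb).hasDerivAt).sub ((hasDerivAt_id x).const_mul lam)
        simpa using this.deriv
      rw [hd]
      have h1x := h1 x hxb
      have := hwpos x (le_of_lt hx)
      nlinarith
  set t : ℝ := (1 - u 0) / lam - 1 with htdef
  have hu0 : 1 ≤ u 0 := h1 0 hb
  have ht0 : t ≤ 0 := by
    rw [htdef]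
    have : (1 - u 0) / lam ≤ 0 := by
      apply div_nonpos_of_nonpos_of_nonneg <;> linarith
    linarith
  have := hhmono (Set.mem_Iic.2 ht0) (Set.mem_Iic.2 le_rfl) ht0
  have h1t := h1 t (lt_of_le_of_lt ht0 hb)
  simp only [hh] at this
  have htval : lam * t = 1 - u 0 - lam := by
    rw [htdef]
    field_simp
  nlinarith [htval]
end

section
/- Let ξ : ℝ → ℝ be continuous and non-increasing. In the jet space J = ℝ × ℝⁿ × Sym²(ℝⁿ) with coordinates (r, p, A), define E_ξ := closure{(r,p,A) : |p| < ξ(r)}. Then the Dirichlet dual satisfies Ẽ_ξ = closure{(r,p,A) : |p| > ξ(−r)}, where the Dirichlet dual of F is F̃ := −(∁ int F). -/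
open scoped Pointwise

/-- The Dirichlet dual of a set `F`: the complement of `-(interior F)`. -/
def dirichletDual {V : Type*} [Neg V] [TopologicalSpace V] (F : Set V) : Set V :=
  (-(interior F))ᶜ

/-- The Euclidean length of `p`. -/
noncomputable def vlen {n : ℕ} (p : Fin n → ℝ) : ℝ :=
  Real.sqrt (∑ i, p i * p i)

lemma vlen_nonneg {n : ℕ} (p : Fin n → ℝ) : 0 ≤ vlen p := Real.sqrt_nonneg _

lemma vlen_continuous {n : ℕ} : Continuous (vlen (n := n)) := by
  unfold vlen
  exact Real.continuous_sqrt.comp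
    (continuous_finset_sum _ fun i _ => (continuous_apply i).mul (continuous_apply i))

lemma vlen_neg {n : ℕ} (p : Fin n → ℝ) : vlen (-p) = vlen p := by
  unfold vlen
  simp [neg_mul_neg]

lemma vlen_smul {n : ℕ} (t : ℝ) (ht : 0 ≤ t) (p : Fin n → ℝ) :
    vlen (t • p) = t * vlen p := by
  unfold vlen
  have h : ∑ i, (t • p) i * (t • p) i = t ^ 2 * ∑ i, p i * p i := by
    rw [Finset.mul_sum]
    refine Finset.sum_congr rfl fun i _ => ?_
    simp [Pi.smul_apply, smul_eq_mul]; ring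
  rw [h, Real.sqrt_mul (sq_nonneg t), Real.sqrt_sq ht]

lemma vlen_eq_zero {n : ℕ} {p : Fin n → ℝ} (h : vlen p = 0) : p = 0 := by
  unfold vlen at h
  have hs : ∑ i, p i * p i = 0 := by
    have hnn : 0 ≤ ∑ i, p i * p i := Finset.sum_nonneg fun i _ => mul_self_nonneg _
    have := Real.sqrt_eq_zero hnn |>.mp h
    exact this
  funext i
  have := (Finset.sum_eq_zero_iff_of_nonneg (fun i _ => mul_self_nonneg (p i))).mp hs i
    (Finset.mem_univ i)
  have := mul_self_eq_zero.mp this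
  simpa using this

lemma exists_seq_gt {n : ℕ} (hn : 0 < n) (c : ℝ) (p : Fin n → ℝ) (h : c ≤ vlen p) :
    ∃ u : ℕ → (Fin n → ℝ), Filter.Tendsto u Filter.atTop (nhds p) ∧ ∀ k, c < vlen (u k) := by
  rcases lt_or_eq_of_le h with h | h
  · exact ⟨fun _ => p, tendsto_const_nhds, fun _ => h⟩
  · rcases eq_or_lt_of_le (vlen_nonneg p) with h0 | h0
    · -- vlen p = 0, so p = 0 and c = 0
      have hp : p = 0 := vlen_eq_zero h0.symm
      have hc : c = 0 := by rw [h, ← h0]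

      set e : Fin n → ℝ := fun _ => 1 with he
      refine ⟨fun k => (1 / (k + 1 : ℝ)) • e, ?_, ?_⟩
      · have h1 : Filter.Tendsto (fun k : ℕ => (1 / (k + 1 : ℝ))) Filter.atTop (nhds 0) :=
          tendsto_one_div_add_atTop_nhds_zero_nat
        have := h1.smul_const e
        simpa [hp] using this
      · intro k
        have hk : (0 : ℝ) < 1 / (k + 1 : ℝ) := by positivity
        have hone : vlen e = Real.sqrt n := by unfold vlen; simp [he]
        rw [vlen_smul _ hk.le, hone, hc]
        have hsn : (0 : ℝ) < Real.sqrt n := Real.sqrt_pos.mpr (by exact_mod_cast hn)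
        positivity
    · -- 0 < vlen p
      refine ⟨fun k => (1 + 1 / (k + 1 : ℝ)) • p, ?_, ?_⟩
      · have h1 : Filter.Tendsto (fun k : ℕ => (1 + 1 / (k + 1 : ℝ))) Filter.atTop (nhds 1) := by
          have : Filter.Tendsto (fun k : ℕ => 1 / ((k : ℝ) + 1)) Filter.atTop (nhds 0) :=
            tendsto_one_div_add_atTop_nhds_zero_nat
          simpa using (tendsto_const_nhds (x := (1:ℝ))).add this
        have := h1.smul_const p
        simpa using this
      · intro k
        have hk : (0 : ℝ) < 1 / (k + 1 : ℝ) := by positivity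
        rw [vlen_smul _ (by linarith), h]
        nlinarith

lemma mem_closure_jet {n : ℕ} (hn : 0 < n) (g : ℝ → ℝ) (r : ℝ) (p : Fin n → ℝ)
    (A : Matrix (Fin n) (Fin n) ℝ) (h : g r ≤ vlen p) :
    (r, p, A) ∈ closure {j : ℝ × (Fin n → ℝ) × Matrix (Fin n) (Fin n) ℝ |
      g j.1 < vlen j.2.1} := by
  obtain ⟨u, hu, hgt⟩ := exists_seq_gt hn (g r) p h
  have hcontmap : Continuous fun q : Fin n → ℝ =>
      ((r, q, A) : ℝ × (Fin n → ℝ) × Matrix (Fin n) (Fin n) ℝ) := by fun_prop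
  have htend := (hcontmap.tendsto p).comp hu
  exact mem_closure_of_tendsto htend (Filter.Eventually.of_forall fun k => hgt k)

set_option maxHeartbeats 2000000 in
/-- Duality for the generalized eikonal subequation: for `ξ` continuous and
non-increasing (with `ξ > 0`, or `ξ ≥ 0` vanishing exactly on `[0,∞)`), the Dirichlet
dual of `E_ξ = closure {|p| < ξ(r)}` in the jet space `ℝ × ℝⁿ × Sym²(ℝⁿ)` is
`closure {|p| > ξ(-r)}`. -/
theorem dirichletDual_eikonal {n : ℕ} (hn : 0 < n) (ξ : ℝ → ℝ)
    (hξc : Continuous ξ) (hξm : Antitone ξ)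
    (hξ : (∀ r, 0 < ξ r) ∨ ((∀ r, 0 ≤ ξ r) ∧ ξ 0 = 0 ∧ ∀ r < 0, 0 < ξ r)) :
    dirichletDual (closure {j : ℝ × (Fin n → ℝ) × Matrix (Fin n) (Fin n) ℝ |
        vlen j.2.1 < ξ j.1})
      = closure {j : ℝ × (Fin n → ℝ) × Matrix (Fin n) (Fin n) ℝ |
        ξ (-j.1) < vlen j.2.1} := by
  set S : Set (ℝ × (Fin n → ℝ) × Matrix (Fin n) (Fin n) ℝ) :=
    {j | vlen j.2.1 < ξ j.1} with hS
  have hcp : Continuous fun j : ℝ × (Fin n → ℝ) × Matrix (Fin n) (Fin n) ℝ =>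
      vlen j.2.1 := vlen_continuous.comp (continuous_fst.comp continuous_snd)
  have hcr : Continuous fun j : ℝ × (Fin n → ℝ) × Matrix (Fin n) (Fin n) ℝ =>
      ξ j.1 := hξc.comp continuous_fst
  have hSopen : IsOpen S := isOpen_lt hcp hcr
  have hC : closure S ⊆ {j : ℝ × (Fin n → ℝ) × Matrix (Fin n) (Fin n) ℝ |
      vlen j.2.1 ≤ ξ j.1} := by
    apply closure_minimal ?_ (isClosed_le hcp hcr)
    intro j hj
    exact le_of_lt (show vlen j.2.1 < ξ j.1 from hj)
  have hint : interior (closure S) = S := by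
    apply subset_antisymm
    · intro j hj
      obtain ⟨r, p, A⟩ := j
      by_contra hc
      have hc' : ξ r ≤ vlen p := not_lt.mp hc
      obtain ⟨u, hu, hgt⟩ := exists_seq_gt hn (ξ r) p hc'
      have hcontmap : Continuous fun q : Fin n → ℝ =>
          ((r, q, A) : ℝ × (Fin n → ℝ) × Matrix (Fin n) (Fin n) ℝ) :=
        continuous_const.prodMk (continuous_id.prodMk continuous_const)
      have htend : Filter.Tendsto (fun k => ((r, u k, A) :
          ℝ × (Fin n → ℝ) × Matrix (Fin n) (Fin n) ℝ)) Filter.atTop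
          (nhds (r, p, A)) := (hcontmap.tendsto p).comp hu
      have hnb : interior (closure S) ∈
          nhds ((r, p, A) : ℝ × (Fin n → ℝ) × Matrix (Fin n) (Fin n) ℝ) :=
        (isOpen_interior).mem_nhds hj
      have hev := htend.eventually_mem hnb
      obtain ⟨k, hk⟩ := hev.exists
      have : vlen (u k) ≤ ξ r := hC (interior_subset hk)
      exact absurd this (not_le.mpr (hgt k))
    · exact interior_maximal subset_closure hSopen
  have hclo : closure {j : ℝ × (Fin n → ℝ) × Matrix (Fin n) (Fin n) ℝ |
        ξ (-j.1) < vlen j.2.1}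
      = {j : ℝ × (Fin n → ℝ) × Matrix (Fin n) (Fin n) ℝ | ξ (-j.1) ≤ vlen j.2.1} := by
    apply subset_antisymm
    · apply closure_minimal ?_ (isClosed_le (hξc.comp (continuous_fst.neg)) hcp)
      intro j hj
      exact le_of_lt (show ξ (-j.1) < vlen j.2.1 from hj)
    · intro j hj
      obtain ⟨r, p, A⟩ := j
      exact mem_closure_jet hn (fun t => ξ (-t)) r p A hj
  rw [hclo]
  ext j
  obtain ⟨r, p, A⟩ := j
  have hint' : interior (closure {j : ℝ × (Fin n → ℝ) × Matrix (Fin n) (Fin n) ℝ |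
      vlen j.2.1 < ξ j.1}) = {j | vlen j.2.1 < ξ j.1} := hint
  simp only [dirichletDual, hint, hint', Set.mem_compl_iff, Set.mem_neg, hS, Set.mem_setOf_eq,
    Prod.fst_neg, Prod.snd_neg, vlen_neg, not_lt]
end

section
/- Ahlfors implies Liouville: Let X be a manifold, F̃ a fiberwise subset of the jet space, and set H := F̃ ∪ {r ≤ 0}. Suppose F̃ has the Ahlfors property: for every open U ⊆ X with nonempty boundary and every u ∈ USC(closure U) bounded above, H-subharmonic on U and positive somewhere, one has sup_{∂U} u⁺ = sup_{closure U} u. Then F̃ has the Liouville property: every bounded, non-negative, F̃-subharmonic function on X is constant. -/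
open Filter Topology

/-- Jets `(r, p, A)` over a point, modelled on `ℝⁿ`. -/
abbrev Jet (n : ℕ) : Type := ℝ × (Fin n → ℝ) × Matrix (Fin n) (Fin n) ℝ

/-- `u` is `A`-subharmonic on `U` in the viscosity sense: every test function
`φ ∈ Tests` touching `u` from above at a point `x ∈ U` has jet `jet φ x ∈ A x`. -/
def IsSubharmonicOn {X : Type*} [TopologicalSpace X] {n : ℕ}
    (Tests : Set (X → ℝ)) (jet : (X → ℝ) → X → Jet n)
    (A : X → Set (Jet n)) (u : X → ℝ) (U : Set X) : Prop :=
  ∀ x ∈ U, ∀ φ ∈ Tests, φ x = u x → (∀ᶠ y in 𝓝 x, u y ≤ φ y) → jet φ x ∈ A x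

/-- Ahlfors implies Liouville: if `F̃` has the Ahlfors property (with
`H := F̃ ∪ {r ≤ 0}`: for every open `U` with nonempty boundary and every
`u ∈ USC(closure U)` bounded above, `H`-subharmonic on `U` and positive somewhere,
`sup_{∂U} u⁺ = sup_{closure U} u`), then every bounded, non-negative,
`F̃`-subharmonic function on `X` is constant. Here `X` is a manifold-like space:
`T1` with no isolated points. -/
theorem ahlfors_implies_liouville {X : Type*} [TopologicalSpace X] [T1Space X] {n : ℕ}
    (hX : ∀ x : X, ¬ IsOpen ({x} : Set X))
    (Tests : Set (X → ℝ)) (jet : (X → ℝ) → X → Jet n)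
    (Ft : X → Set (Jet n))
    (ahlfors : ∀ U : Set X, IsOpen U → (frontier U).Nonempty →
      ∀ u : X → ℝ, UpperSemicontinuousOn u (closure U) → BddAbove (u '' closure U) →
        IsSubharmonicOn Tests jet (fun x => Ft x ∪ {j : Jet n | j.1 ≤ 0}) u U →
        (∃ x ∈ closure U, 0 < u x) →
        sSup ((fun y => max (u y) 0) '' frontier U) = sSup (u '' closure U)) :
    ∀ u : X → ℝ, UpperSemicontinuous u → BddAbove (Set.range u) → (∀ x, 0 ≤ u x) →
      IsSubharmonicOn Tests jet Ft u Set.univ → ∀ x y, u x = u y := by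
  intro u hu hb hnn hsub x y
  have key : ∀ a b : X, u a < u b → False := by
    intro a b hab
    have hint : interior ({a} : Set X) = ∅ := by
      by_contra h
      have h2 : interior ({a} : Set X) = {a} :=
        (Set.Nonempty.subset_singleton_iff (Set.nonempty_iff_ne_empty.2 h)).1
          interior_subset
      exact hX a (h2 ▸ isOpen_interior)
    have hcl : closure ({a}ᶜ : Set X) = Set.univ := by
      rw [closure_compl, hint, Set.compl_empty]
    have hfr : frontier ({a}ᶜ : Set X) = {a} := by
      rw [frontier_compl, frontier, hint, closure_singleton, Set.diff_empty]
    have hbdd : BddAbove (u '' closure ({a}ᶜ : Set X)) := by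
      rw [hcl, Set.image_univ]; exact hb
    have hmain := ahlfors {a}ᶜ isOpen_compl_singleton
      (by rw [hfr]; exact Set.singleton_nonempty a) u
      (fun z _ => UpperSemicontinuousAt.upperSemicontinuousWithinAt _ (hu z)) hbdd
      (fun z hz φ hφ heq hev => Or.inl (hsub z trivial φ hφ heq hev))
      ⟨b, by rw [hcl]; exact Set.mem_univ b, lt_of_le_of_lt (hnn a) hab⟩
    rw [hfr, hcl, Set.image_univ, Set.image_singleton, csSup_singleton,
      max_eq_left (hnn a)] at hmain
    have : u b ≤ u a := hmain ▸ le_csSup hb ⟨b, rfl⟩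
    exact absurd hab (not_lt.2 this)
  rcases lt_trichotomy (u x) (u y) with h | h | h
  · exact absurd h (fun h => key x y h)
  · exact h
  · exact absurd h (fun h => key y x h)
end

section
/- Theorem-on-sums contradiction for quasilinear operators with bounded coefficients (Euclidean one-point version): Let f : ℝ → ℝ be strictly increasing and continuous, λ₁ ≥ 0, λ₂ > 0 bounded continuous functions on [0,∞), T(p) := λ₁(|p|)Π_p + λ₂(|p|)Π_{p⊥} for p ≠ 0, and R > 0. Suppose c₀ > 0 and there exist sequences r_α, s_α ∈ [−R, R], p_α ∈ ℝⁿ \ {0}, symmetric matrices A_α, B_α, and κ ≥ 0, δ_α → 0 with: tr(T(p_α)A_α) ≥ f(r_α); tr(T(p_α)(κ δ_α I − A_α)) ≥ −f(r_α − c_α) with c_α ↓ c₀ > 0 (here B_α = κδ_α I − A_α after parallel transport). Then summing yields κ δ_α · tr(T(p_α)) ≥ f(r_α) − f(r_α − c_α) ≥ inf_{|r| ≤ R}(f(r) − f(r − c₀/2)) > 0 for large α, while the left side tends to 0 since tr T(p) ≤ λ₁(|p|) + (n−1)λ₂(|p|) is bounded — a contradiction. Conclude: no such sequences exist. -/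
open Filter Topology

/-- Orthogonal projection (as a matrix) onto the line spanned by `p`. -/
noncomputable def projLine {n : ℕ} (p : Fin n → ℝ) : Matrix (Fin n) (Fin n) ℝ :=
  (∑ i, p i * p i)⁻¹ • Matrix.vecMulVec p p

/-- The coefficient matrix `T(p) = λ₁(|p|) Π_p + λ₂(|p|) Π_{p⊥}` of a quasilinear
operator. -/
noncomputable def Tcoef {n : ℕ} (lam1 lam2 : ℝ → ℝ) (p : Fin n → ℝ) :
    Matrix (Fin n) (Fin n) ℝ :=
  lam1 (Real.sqrt (∑ i, p i * p i)) • projLine p +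
    lam2 (Real.sqrt (∑ i, p i * p i)) • ((1 : Matrix (Fin n) (Fin n) ℝ) - projLine p)

/-- Theorem-on-sums contradiction for quasilinear operators with bounded
coefficients: for `f` strictly increasing continuous and `λ₁ ≥ 0`, `λ₂ > 0` bounded
continuous, there are no sequences `r_α, c_α, δ_α, p_α ≠ 0, A_α` with `|r_α| ≤ R`,
`c_α ↓ c₀ > 0`, `δ_α → 0`, `tr(T(p_α)A_α) ≥ f(r_α)` and
`tr(T(p_α)(κδ_α·I − A_α)) ≥ −f(r_α − c_α)`. -/
theorem no_theorem_on_sums_sequences {n : ℕ} (f lam1 lam2 : ℝ → ℝ)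
    (hf : StrictMono f) (hfc : Continuous f)
    (h1c : Continuous lam1) (h2c : Continuous lam2)
    (h1 : ∀ t, 0 ≤ t → 0 ≤ lam1 t) (h2 : ∀ t, 0 ≤ t → 0 < lam2 t)
    (M : ℝ) (hM1 : ∀ t, 0 ≤ t → lam1 t ≤ M) (hM2 : ∀ t, 0 ≤ t → lam2 t ≤ M)
    (R : ℝ) (hR : 0 < R) (c₀ : ℝ) (hc₀ : 0 < c₀) (κ : ℝ) (hκ : 0 ≤ κ) :
    ¬ ∃ (r c δ : ℕ → ℝ) (p : ℕ → (Fin n → ℝ))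
        (A : ℕ → Matrix (Fin n) (Fin n) ℝ),
      (∀ α, |r α| ≤ R) ∧ (∀ α, p α ≠ 0) ∧
      Antitone c ∧ Tendsto c atTop (𝓝 c₀) ∧ (∀ α, c₀ ≤ c α) ∧
      Tendsto δ atTop (𝓝 0) ∧
      (∀ α, f (r α) ≤ (Tcoef lam1 lam2 (p α) * A α).trace) ∧
      (∀ α, -f (r α - c α) ≤
        (Tcoef lam1 lam2 (p α) *
          ((κ * δ α) • (1 : Matrix (Fin n) (Fin n) ℝ) - A α)).trace) := by
  rintro ⟨r, c, δ, p, A, hrR, hp, -, -, hcc, hδ, hA, hB⟩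
  rcases Nat.eq_zero_or_pos n with hn | hn
  · exact hp 0 (by subst hn; exact Subsingleton.elim _ _)
  have hM0 : 0 ≤ M := le_trans (le_of_lt (h2 0 le_rfl)) (hM2 0 le_rfl)
  -- trace of Tcoef
  have htr : ∀ α,
      (Tcoef lam1 lam2 (p α)).trace =
        lam1 (Real.sqrt (∑ i, p α i * p α i)) +
          lam2 (Real.sqrt (∑ i, p α i * p α i)) * ((n : ℝ) - 1) := by
    intro α
    have hsum : 0 < ∑ i, p α i * p α i := by
      obtain ⟨i, hi⟩ := Function.ne_iff.mp (hp α)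
      refine Finset.sum_pos' (fun j _ => mul_self_nonneg _) ⟨i, Finset.mem_univ i, ?_⟩
      exact mul_self_pos.mpr hi
    have hproj : (projLine (p α)).trace = 1 := by
      have : (Matrix.vecMulVec (p α) (p α)).trace = ∑ i, p α i * p α i := by
        simp [Matrix.trace, Matrix.vecMulVec, Matrix.diag]
      simp [projLine, Matrix.trace_smul, this, smul_eq_mul,
        inv_mul_cancel₀ hsum.ne']
    simp [Tcoef, Matrix.trace_add, Matrix.trace_smul, Matrix.trace_sub,
      Matrix.trace_one, hproj, smul_eq_mul]
    try ring
  have htrb : ∀ α, 0 ≤ (Tcoef lam1 lam2 (p α)).trace ∧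
      (Tcoef lam1 lam2 (p α)).trace ≤ M * n := by
    intro α
    rw [htr α]
    set s := Real.sqrt (∑ i, p α i * p α i) with hs
    have hs0 : 0 ≤ s := Real.sqrt_nonneg _
    have hn1 : (1 : ℝ) ≤ (n : ℝ) := by exact_mod_cast hn
    constructor
    · have := (h2 s hs0).le
      have := h1 s hs0
      nlinarith
    · have h1' := hM1 s hs0
      have h2' := hM2 s hs0
      have h2'' := (h2 s hs0).le
      nlinarith
  -- minimum of f r - f (r - c₀) on [-R, R]
  obtain ⟨r₀, hr₀, hmin⟩ := isCompact_Icc.exists_isMinOn (Set.nonempty_Icc.mpr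
    (by linarith : -R ≤ R)) ((hfc.sub (hfc.comp (continuous_id.sub continuous_const))).continuousOn :
      ContinuousOn (fun r => f r - f (r - c₀)) (Set.Icc (-R) R))
  set ε := f r₀ - f (r₀ - c₀) with hε
  have hεpos : 0 < ε := sub_pos.mpr (hf (by linarith))
  -- key inequality for each α
  have key : ∀ α, ε ≤ κ * |δ α| * (M * n) := by
    intro α
    have h1' := hA α
    have h2' := hB α
    have htrace : (Tcoef lam1 lam2 (p α) *
        ((κ * δ α) • (1 : Matrix (Fin n) (Fin n) ℝ) - A α)).trace =
        (κ * δ α) * (Tcoef lam1 lam2 (p α)).trace -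
          (Tcoef lam1 lam2 (p α) * A α).trace := by
      rw [Matrix.mul_sub, Matrix.trace_sub, Matrix.mul_smul, Matrix.mul_one,
        Matrix.trace_smul, smul_eq_mul]
    rw [htrace] at h2'
    have hsum' : f (r α) - f (r α - c α) ≤
        (κ * δ α) * (Tcoef lam1 lam2 (p α)).trace := by linarith
    have hεle : ε ≤ f (r α) - f (r α - c α) := by
      have hmem : r α ∈ Set.Icc (-R) R := abs_le.mp (hrR α) |>.imp id id |> fun h => ⟨h.1, h.2⟩
      have := hmin hmem
      have hmono : f (r α - c α) ≤ f (r α - c₀) := hf.monotone (by linarith [hcc α])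
      simp only [Set.mem_setOf_eq] at this
      have : ε ≤ f (r α) - f (r α - c₀) := this
      linarith
    obtain ⟨ht0, htM⟩ := htrb α
    have hb1 : (κ * δ α) * (Tcoef lam1 lam2 (p α)).trace ≤
        (κ * |δ α|) * (Tcoef lam1 lam2 (p α)).trace := by
      have : κ * δ α ≤ κ * |δ α| := mul_le_mul_of_nonneg_left (le_abs_self _) hκ
      exact mul_le_mul_of_nonneg_right this ht0
    have hb2 : (κ * |δ α|) * (Tcoef lam1 lam2 (p α)).trace ≤ κ * |δ α| * (M * n) :=
      mul_le_mul_of_nonneg_left htM (by positivity)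
    linarith
  -- the right side tends to 0
  have hlim : Tendsto (fun α => κ * |δ α| * (M * n)) atTop (𝓝 0) := by
    have : Tendsto (fun α => |δ α|) atTop (𝓝 0) := by
      simpa using hδ.abs
    simpa using (this.const_mul κ).mul_const (M * n)
  obtain ⟨α, hα⟩ := (hlim.eventually_lt_const hεpos).exists
  exact absurd (key α) (not_le.mpr hα)
end
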